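/- Let f satisfy hypothesis (H) and be of type A, B, or C, and for a, b > 0 denote by c*_{a,b} the critical speed. Then for each fixed b > 0 the map a ↦ c*_{a,b} is nonincreasing on (0, +∞), and for each fixed a > 0 the map b ↦ c*_{a,b} is nondecreasing on (0, +∞). -/

import Mathlib

open Real Set Filter Topology

/-- `Ffn f v = ∫₀^v f(s) ds`. -/
noncomputable def Ffn (f : ℝ → ℝ) (v : ℝ) : ℝ := ∫ s in (0:ℝ)..v, f s

/-- Hypothesis (H): `f` continuous on `[0,1]`, vanishing at the endpoints,
with linear controls at `0` and `1`. -/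
def HypH (f : ℝ → ℝ) : Prop :=
  ContinuousOn f (Set.Icc 0 1) ∧ f 0 = 0 ∧ f 1 = 0 ∧
    ∃ k > (0:ℝ), ∀ s ∈ Set.Icc (0:ℝ) 1, |f s| ≤ k * s ∧ |f s| ≤ k * (1 - s)

/-- Type A (monostable): `f > 0` on `(0,1)`. -/
def TypeA (f : ℝ → ℝ) : Prop := ∀ s ∈ Set.Ioo (0:ℝ) 1, 0 < f s

/-- Type B (combustion) with switching point `α`. -/
def TypeB (f : ℝ → ℝ) (α : ℝ) : Prop :=
  α ∈ Set.Ioo (0:ℝ) 1 ∧ (∀ s ∈ Set.Icc (0:ℝ) α, f s = 0) ∧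
    ∀ s ∈ Set.Ioo α 1, 0 < f s

/-- Type C (bistable) with switching point `α` and `∫₀¹ f ≥ 0`. -/
def TypeC (f : ℝ → ℝ) (α : ℝ) : Prop :=
  α ∈ Set.Ioo (0:ℝ) 1 ∧ (∀ s ∈ Set.Ioo (0:ℝ) α, f s < 0) ∧
    (∀ s ∈ Set.Ioo α 1, 0 < f s) ∧ 0 ≤ Ffn f 1

/-- `R_{a,b}(s) = √(s(2a + b²s))/(a + b²s)`. -/
noncomputable def Rab (a b s : ℝ) : ℝ :=
  Real.sqrt (s * (2 * a + b ^ 2 * s)) / (a + b ^ 2 * s)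

/-- `c` is an admissible speed for `(f, a, b)`: the first-order reduction
`y' = c·a·R_{a,b}(y) − f(v)` has a solution on `[0,1]` with `y(0) = y(1) = 0`
and `y > 0` on `(0,1)`. -/
def Admissible (f : ℝ → ℝ) (a b c : ℝ) : Prop :=
  ∃ y : ℝ → ℝ, y 0 = 0 ∧ y 1 = 0 ∧ (∀ v ∈ Set.Ioo (0:ℝ) 1, 0 < y v) ∧
    ∀ v ∈ Set.Icc (0:ℝ) 1,
      HasDerivWithinAt y (c * a * Rab a b (y v) - f v) (Set.Icc 0 1) v

/-- A (monotone) front profile propagating with speed `c` for parameters `a, b`: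
a strictly increasing `C²` solution of `(v'/√(a² − b²(v')²))' − c v' + f(v) = 0`
with `|v'| < a/b`, connecting `0` (at `−∞`) and `1` (at `+∞`). -/
def FrontProfile (f : ℝ → ℝ) (a b c : ℝ) (v : ℝ → ℝ) : Prop :=
  StrictMono v ∧ ContDiff ℝ 2 v ∧ (∀ z, |deriv v z| < a / b) ∧
    (∀ z, deriv (fun t => deriv v t / Real.sqrt (a ^ 2 - b ^ 2 * (deriv v t) ^ 2)) z
        - c * deriv v z + f (v z) = 0) ∧
    Filter.Tendsto v Filter.atBot (nhds 0) ∧ Filter.Tendsto v Filter.atTop (nhds 1)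

section Aux

open intervalIntegral MeasureTheory

/-! ### Basic facts about `Rab` -/

lemma Rab_zero (a b : ℝ) : Rab a b 0 = 0 := by
  simp [Rab]

lemma Rab_nonneg {a b : ℝ} (ha : 0 < a) (hb : 0 < b) {s : ℝ} (hs : 0 ≤ s) :
    0 ≤ Rab a b s := by
  have hD : 0 < a + b ^ 2 * s := by positivity
  exact div_nonneg (Real.sqrt_nonneg _) hD.le

lemma Rab_pos {a b : ℝ} (ha : 0 < a) (hb : 0 < b) {s : ℝ} (hs : 0 < s) :
    0 < Rab a b s := by
  have hD : 0 < a + b ^ 2 * s := by positivity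
  have hN : 0 < s * (2 * a + b ^ 2 * s) := by positivity
  exact div_pos (Real.sqrt_pos.mpr hN) hD

/-- helper to compare values of `Rab`-type quotients via squares -/
lemma sqrt_div_le_sqrt_div {N₁ N₂ D₁ D₂ : ℝ} (hN₁ : 0 ≤ N₁) (hD₁ : 0 < D₁) (hD₂ : 0 < D₂)
    (h : N₁ * D₂ ^ 2 ≤ N₂ * D₁ ^ 2) :
    Real.sqrt N₁ / D₁ ≤ Real.sqrt N₂ / D₂ := by
  have hN₂ : 0 ≤ N₂ := by
    by_contra hc
    push_neg at hc
    have h2 : N₂ * D₁ ^ 2 < 0 := mul_neg_of_neg_of_pos hc (pow_pos hD₁ 2)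
    have h3 : 0 ≤ N₁ * D₂ ^ 2 := mul_nonneg hN₁ (sq_nonneg D₂)
    linarith
  rw [div_le_div_iff₀ hD₁ hD₂]
  have h1 : Real.sqrt N₁ * D₂ = Real.sqrt (N₁ * D₂ ^ 2) := by
    rw [Real.sqrt_mul hN₁ (D₂ ^ 2), Real.sqrt_sq hD₂.le]
  have h2 : Real.sqrt N₂ * D₁ = Real.sqrt (N₂ * D₁ ^ 2) := by
    rw [Real.sqrt_mul hN₂ (D₁ ^ 2), Real.sqrt_sq hD₁.le]
  rw [h1, h2]
  exact Real.sqrt_le_sqrt h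

lemma sqrt_div_lt_sqrt_div {N₁ N₂ D₁ D₂ : ℝ} (hN₁ : 0 ≤ N₁) (hD₁ : 0 < D₁) (hD₂ : 0 < D₂)
    (h : N₁ * D₂ ^ 2 < N₂ * D₁ ^ 2) :
    Real.sqrt N₁ / D₁ < Real.sqrt N₂ / D₂ := by
  have hN₂ : 0 ≤ N₂ := by
    by_contra hc
    push_neg at hc
    have h2 : N₂ * D₁ ^ 2 < 0 := mul_neg_of_neg_of_pos hc (pow_pos hD₁ 2)
    have h3 : 0 ≤ N₁ * D₂ ^ 2 := mul_nonneg hN₁ (sq_nonneg D₂)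
    linarith
  rw [div_lt_div_iff₀ hD₁ hD₂]
  have h1 : Real.sqrt N₁ * D₂ = Real.sqrt (N₁ * D₂ ^ 2) := by
    rw [Real.sqrt_mul hN₁ (D₂ ^ 2), Real.sqrt_sq hD₂.le]
  have h2 : Real.sqrt N₂ * D₁ = Real.sqrt (N₂ * D₁ ^ 2) := by
    rw [Real.sqrt_mul hN₂ (D₁ ^ 2), Real.sqrt_sq hD₁.le]
  rw [h1, h2]
  exact Real.sqrt_lt_sqrt (mul_nonneg hN₁ (sq_nonneg D₂)) h

lemma Rab_le {a b : ℝ} (ha : 0 < a) (hb : 0 < b) {s : ℝ} (hs : 0 ≤ s) :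
    Rab a b s ≤ 1 / b := by
  have h1 : (1:ℝ) / b = Real.sqrt ((1 / b) ^ 2) / 1 := by
    rw [Real.sqrt_sq (by positivity), div_one]
  rw [Rab, h1]
  apply sqrt_div_le_sqrt_div (by positivity) (by positivity) one_pos
  have hb2 : (1 / b) ^ 2 = 1 / b ^ 2 := by rw [div_pow, one_pow]
  rw [hb2]
  rw [div_mul_eq_mul_div, le_div_iff₀ (by positivity)]
  nlinarith [sq_nonneg a]

lemma Rab_monotoneOn {a b : ℝ} (ha : 0 < a) (hb : 0 < b) :
    MonotoneOn (Rab a b) (Set.Ici 0) := by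
  rintro s₁ (hs₁ : (0:ℝ) ≤ s₁) s₂ (hs₂ : (0:ℝ) ≤ s₂) h12
  have hD₁ : 0 < a + b ^ 2 * s₁ := by positivity
  have hD₂ : 0 < a + b ^ 2 * s₂ := by positivity
  apply sqrt_div_le_sqrt_div (by positivity) hD₁ hD₂
  have key : s₂ * (2 * a + b ^ 2 * s₂) * (a + b ^ 2 * s₁) ^ 2
      - s₁ * (2 * a + b ^ 2 * s₁) * (a + b ^ 2 * s₂) ^ 2
      = a ^ 2 * (s₂ - s₁) * (2 * a + b ^ 2 * s₁ + b ^ 2 * s₂) := by ring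
  nlinarith [mul_nonneg (mul_nonneg (sq_nonneg a) (sub_nonneg.mpr h12))
    (by positivity : (0:ℝ) ≤ 2 * a + b ^ 2 * s₁ + b ^ 2 * s₂)]

lemma Rab_strict_a {a₁ a₂ b : ℝ} (ha₁ : 0 < a₁) (ha₂ : a₁ < a₂) (hb : 0 < b) {s : ℝ}
    (hs : 0 < s) : a₁ * Rab a₁ b s < a₂ * Rab a₂ b s := by
  have ha₂' : 0 < a₂ := lt_trans ha₁ ha₂
  have hD₁ : 0 < a₁ + b ^ 2 * s := by positivity
  have hD₂ : 0 < a₂ + b ^ 2 * s := by positivity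
  have e₁ : a₁ * Rab a₁ b s
      = Real.sqrt (a₁ ^ 2 * (s * (2 * a₁ + b ^ 2 * s))) / (a₁ + b ^ 2 * s) := by
    rw [Rab, Real.sqrt_mul (sq_nonneg a₁), Real.sqrt_sq ha₁.le, mul_div_assoc]
  have e₂ : a₂ * Rab a₂ b s
      = Real.sqrt (a₂ ^ 2 * (s * (2 * a₂ + b ^ 2 * s))) / (a₂ + b ^ 2 * s) := by
    rw [Rab, Real.sqrt_mul (sq_nonneg a₂), Real.sqrt_sq ha₂'.le, mul_div_assoc]
  rw [e₁, e₂]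
  apply sqrt_div_lt_sqrt_div (by positivity) hD₁ hD₂
  have key : a₂ ^ 2 * (s * (2 * a₂ + b ^ 2 * s)) * (a₁ + b ^ 2 * s) ^ 2
      - a₁ ^ 2 * (s * (2 * a₁ + b ^ 2 * s)) * (a₂ + b ^ 2 * s) ^ 2
      = s * (a₂ - a₁) * (2 * a₁ ^ 2 * a₂ ^ 2
        + 4 * a₁ * a₂ * (b ^ 2 * s) * (a₁ + a₂)
        + 2 * (b ^ 2 * s) ^ 2 * (a₁ ^ 2 + a₁ * a₂ + a₂ ^ 2)
        + 2 * a₁ * a₂ * (b ^ 2 * s) ^ 2 + (b ^ 2 * s) ^ 3 * (a₁ + a₂)) := by ring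
  have hbr : 0 < 2 * a₁ ^ 2 * a₂ ^ 2
        + 4 * a₁ * a₂ * (b ^ 2 * s) * (a₁ + a₂)
        + 2 * (b ^ 2 * s) ^ 2 * (a₁ ^ 2 + a₁ * a₂ + a₂ ^ 2)
        + 2 * a₁ * a₂ * (b ^ 2 * s) ^ 2 + (b ^ 2 * s) ^ 3 * (a₁ + a₂) := by positivity
  nlinarith [mul_pos (mul_pos hs (sub_pos.mpr ha₂)) hbr]

lemma Rab_strict_b {a b₁ b₂ : ℝ} (ha : 0 < a) (hb₁ : 0 < b₁) (hb₂ : b₁ < b₂) {s : ℝ}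
    (hs : 0 < s) : Rab a b₂ s < Rab a b₁ s := by
  have hb₂' : 0 < b₂ := lt_trans hb₁ hb₂
  have hD₁ : 0 < a + b₁ ^ 2 * s := by positivity
  have hD₂ : 0 < a + b₂ ^ 2 * s := by positivity
  rw [Rab, Rab]
  apply sqrt_div_lt_sqrt_div (by positivity) hD₂ hD₁
  have key : s * (2 * a + b₁ ^ 2 * s) * (a + b₂ ^ 2 * s) ^ 2
      - s * (2 * a + b₂ ^ 2 * s) * (a + b₁ ^ 2 * s) ^ 2
      = s * ((b₂ ^ 2 - b₁ ^ 2) * s)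
        * (3 * a ^ 2 + 2 * a * (b₁ ^ 2 * s) + 2 * a * (b₂ ^ 2 * s)
          + (b₁ ^ 2 * s) * (b₂ ^ 2 * s)) := by ring
  have hu : 0 < (b₂ ^ 2 - b₁ ^ 2) * s := by
    have : b₁ ^ 2 < b₂ ^ 2 := by nlinarith
    nlinarith
  have hbr : 0 < 3 * a ^ 2 + 2 * a * (b₁ ^ 2 * s) + 2 * a * (b₂ ^ 2 * s)
      + (b₁ ^ 2 * s) * (b₂ ^ 2 * s) := by positivity
  nlinarith [mul_pos (mul_pos hs hu) hbr]

lemma Rab_continuousAt {a b : ℝ} (ha : 0 < a) (hb : 0 < b) {s : ℝ} (hs : 0 ≤ s) :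
    ContinuousAt (Rab a b) s := by
  apply ContinuousAt.div
  · exact (Real.continuous_sqrt.comp (by continuity)).continuousAt
  · exact (by continuity : Continuous fun s : ℝ => a + b ^ 2 * s).continuousAt
  · positivity

lemma Rab_continuousOn {a b : ℝ} (ha : 0 < a) (hb : 0 < b) :
    ContinuousOn (Rab a b) (Set.Ici 0) :=
  fun s hs => (Rab_continuousAt ha hb hs).continuousWithinAt

/-! ### Derivative and Lipschitz bound for `Rab` -/

lemma Rab_hasDerivAt {a b s : ℝ} (ha : 0 < a) (hb : 0 < b) (hs : 0 < s) :
    HasDerivAt (Rab a b)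
      (a ^ 2 / (Real.sqrt (s * (2 * a + b ^ 2 * s)) * (a + b ^ 2 * s) ^ 2)) s := by
  have hN : 0 < s * (2 * a + b ^ 2 * s) := by positivity
  have hD : 0 < a + b ^ 2 * s := by positivity
  have hsq : 0 < Real.sqrt (s * (2 * a + b ^ 2 * s)) := Real.sqrt_pos.mpr hN
  have hNd : HasDerivAt (fun x : ℝ => x * (2 * a + b ^ 2 * x)) (2 * a + 2 * b ^ 2 * s) s := by
    have h1 : HasDerivAt (fun x : ℝ => x) 1 s := hasDerivAt_id s
    have h2 : HasDerivAt (fun x : ℝ => 2 * a + b ^ 2 * x) (b ^ 2) s := by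
      simpa using ((hasDerivAt_id s).const_mul (b ^ 2)).const_add (2 * a)
    have := h1.mul h2
    refine HasDerivAt.congr_deriv this ?_
    ring
  have hDd : HasDerivAt (fun x : ℝ => a + b ^ 2 * x) (b ^ 2) s := by
    simpa using ((hasDerivAt_id s).const_mul (b ^ 2)).const_add a
  have hsqrt := hNd.sqrt (ne_of_gt hN)
  have hdiv := hsqrt.div hDd (ne_of_gt hD)
  refine HasDerivAt.congr_deriv hdiv ?_
  set S := Real.sqrt (s * (2 * a + b ^ 2 * s)) with hSdef
  have hss : S * S = s * (2 * a + b ^ 2 * s) := Real.mul_self_sqrt hN.le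
  have h1 : (2 * a + 2 * b ^ 2 * s) / (2 * S) * (a + b ^ 2 * s) - S * b ^ 2
      = ((2 * a + 2 * b ^ 2 * s) * (a + b ^ 2 * s) - 2 * (S * S) * b ^ 2) / (2 * S) := by
    field_simp
  have h2 : (2 * a + 2 * b ^ 2 * s) * (a + b ^ 2 * s)
      - 2 * (s * (2 * a + b ^ 2 * s)) * b ^ 2 = 2 * a ^ 2 := by ring
  rw [h1, hss, h2]
  rw [div_div]
  rw [div_eq_div_iff (by positivity) (by positivity)]
  ring

lemma Rab_lip {a b m : ℝ} (ha : 0 < a) (hb : 0 < b) (hm : 0 < m) {x y : ℝ}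
    (hx : m ≤ x) (hy : m ≤ y) :
    |Rab a b x - Rab a b y| ≤ (1 / Real.sqrt (2 * a * m)) * |x - y| := by
  have hbound : ∀ t ∈ Set.Ici m,
      ‖a ^ 2 / (Real.sqrt (t * (2 * a + b ^ 2 * t)) * (a + b ^ 2 * t) ^ 2)‖
        ≤ 1 / Real.sqrt (2 * a * m) := by
    intro t ht
    have ht' : m ≤ t := ht
    have ht0 : 0 < t := lt_of_lt_of_le hm ht'
    have hN : 0 < t * (2 * a + b ^ 2 * t) := by positivity
    have h2am : 0 < Real.sqrt (2 * a * m) := Real.sqrt_pos.mpr (by positivity)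
    have hsqN : Real.sqrt (2 * a * m) ≤ Real.sqrt (t * (2 * a + b ^ 2 * t)) := by
      apply Real.sqrt_le_sqrt
      nlinarith [sq_nonneg b, mul_pos ht0 (mul_pos (mul_pos hb hb) ht0)]
    have hD : a ≤ a + b ^ 2 * t := by nlinarith [sq_nonneg b]
    have hpos : 0 < Real.sqrt (t * (2 * a + b ^ 2 * t)) * (a + b ^ 2 * t) ^ 2 := by
      have := Real.sqrt_pos.mpr hN
      positivity
    rw [Real.norm_eq_abs, abs_of_nonneg (by positivity)]
    rw [div_le_div_iff₀ hpos h2am]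
    calc a ^ 2 * Real.sqrt (2 * a * m)
        ≤ (a + b ^ 2 * t) ^ 2 * Real.sqrt (t * (2 * a + b ^ 2 * t)) := by
          apply mul_le_mul (by nlinarith [sq_nonneg b, sq_nonneg (b^2*t)]) hsqN h2am.le
            (by positivity)
      _ = 1 * (Real.sqrt (t * (2 * a + b ^ 2 * t)) * (a + b ^ 2 * t) ^ 2) := by ring
  have := (convex_Ici m).norm_image_sub_le_of_norm_hasDerivWithin_le
    (f := Rab a b)
    (f' := fun t => a ^ 2 / (Real.sqrt (t * (2 * a + b ^ 2 * t)) * (a + b ^ 2 * t) ^ 2))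
    (fun t ht => (Rab_hasDerivAt ha hb (lt_of_lt_of_le hm ht)).hasDerivWithinAt)
    hbound hy hx
  simpa [Real.norm_eq_abs] using this

/-! ### Sign of increments from the sign of a one-sided derivative -/

lemma slope_pos_aux {h : ℝ → ℝ} {s : Set ℝ} {t d : ℝ}
    (hD : HasDerivWithinAt h d s t) (hd : 0 < d) :
    ∃ η > 0, ∀ v ∈ s, v ≠ t → |v - t| < η →
      ((t < v → h t < h v) ∧ (v < t → h v < h t)) := by
  have hs := hasDerivWithinAt_iff_tendsto_slope.mp hD
  have hev : ∀ᶠ v in 𝓝[s \ {t}] t, 0 < slope h t v := hs.eventually (eventually_gt_nhds hd)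
  rw [eventually_nhdsWithin_iff] at hev
  rw [Metric.eventually_nhds_iff] at hev
  obtain ⟨η, hη, hev⟩ := hev
  refine ⟨η, hη, fun v hv hvt hd' => ?_⟩
  have : 0 < slope h t v := by
    apply hev (by rwa [Real.dist_eq]) ⟨hv, hvt⟩
  rw [slope_def_field] at this
  constructor
  · intro hlt
    have h1 : 0 < v - t := sub_pos.mpr hlt
    have := mul_pos this h1
    rw [div_mul_cancel₀] at this
    · linarith
    · exact ne_of_gt h1
  · intro hlt
    have h1 : v - t < 0 := sub_neg.mpr hlt
    have := mul_neg_of_pos_of_neg this h1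
    rw [div_mul_cancel₀] at this
    · linarith
    · exact ne_of_lt h1

lemma slope_neg_aux {h : ℝ → ℝ} {s : Set ℝ} {t d : ℝ}
    (hD : HasDerivWithinAt h d s t) (hd : d < 0) :
    ∃ η > 0, ∀ v ∈ s, v ≠ t → |v - t| < η →
      ((t < v → h v < h t) ∧ (v < t → h t < h v)) := by
  obtain ⟨η, hη, hev⟩ := slope_pos_aux (hD.neg) (by linarith : (0:ℝ) < -d)
  refine ⟨η, hη, fun v hv hvt hd' => ?_⟩
  obtain ⟨h1, h2⟩ := hev v hv hvt hd'
  constructor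
  · intro hlt; have := h1 hlt; simp only [Pi.neg_apply] at this; linarith [this]
  · intro hlt; have := h2 hlt; simp only [Pi.neg_apply] at this; linarith [this]

/-! ### Solutions of the first-order reduction -/

/-- A solution of `y' = G(y) - f(v)` on `[0,1]` vanishing at the endpoints and positive
inside. -/
structure Sol (f G y : ℝ → ℝ) : Prop where
  y0 : y 0 = 0
  y1 : y 1 = 0
  pos : ∀ v ∈ Set.Ioo (0:ℝ) 1, 0 < y v
  dv : ∀ v ∈ Set.Icc (0:ℝ) 1, HasDerivWithinAt y (G (y v) - f v) (Set.Icc 0 1) v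

lemma admissible_sol {f : ℝ → ℝ} {a b c : ℝ} (h : Admissible f a b c) :
    ∃ y, Sol f (fun s => c * a * Rab a b s) y := by
  obtain ⟨y, h0, h1, hp, hd⟩ := h
  exact ⟨y, h0, h1, hp, hd⟩

lemma sol_admissible {f : ℝ → ℝ} {a b c : ℝ} {y : ℝ → ℝ}
    (h : Sol f (fun s => c * a * Rab a b s) y) : Admissible f a b c :=
  ⟨y, h.y0, h.y1, h.pos, h.dv⟩

namespace Sol

variable {f G y : ℝ → ℝ}

lemma cont (h : Sol f G y) : ContinuousOn y (Set.Icc 0 1) :=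
  fun v hv => (h.dv v hv).continuousWithinAt

lemma nonneg (h : Sol f G y) : ∀ v ∈ Set.Icc (0:ℝ) 1, 0 ≤ y v := by
  intro v hv
  rcases eq_or_lt_of_le hv.1 with h0 | h0
  · rw [← h0, h.y0]
  rcases eq_or_lt_of_le hv.2 with h1 | h1
  · rw [h1, h.y1]
  exact (h.pos v ⟨h0, h1⟩).le

end Sol

/-! ### A general FTC helper on closed intervals -/

lemma ftc_icc {p P : ℝ → ℝ} {A B : ℝ}
    (hder : ∀ t ∈ Set.Icc A B, HasDerivWithinAt p (P t) (Set.Icc A B) t)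
    (hPc : ContinuousOn P (Set.Icc A B)) {u w : ℝ}
    (hu : u ∈ Set.Icc A B) (hw : w ∈ Set.Icc A B) (huw : u ≤ w) :
    p w - p u = ∫ t in u..w, P t := by
  have hsub : Set.Icc u w ⊆ Set.Icc A B := Set.Icc_subset_Icc hu.1 hw.2
  have hcont : ContinuousOn p (Set.Icc A B) := fun v hv => (hder v hv).continuousWithinAt
  have hder' : ∀ x ∈ Set.Ioo u w, HasDerivWithinAt p (P x) (Set.Ioi x) x := by
    intro x hx
    have hxAB : x ∈ Set.Icc A B := hsub (Set.Ioo_subset_Icc_self hx)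
    have h2 : Set.Icc A B ∈ 𝓝[Set.Ioi x] x := by
      apply Filter.mem_of_superset
        (Ioc_mem_nhdsGT_of_mem ⟨le_refl x, lt_of_lt_of_le hx.2 hw.2⟩)
      exact fun z hz => ⟨le_trans hxAB.1 hz.1.le, hz.2⟩
    exact (hder x hxAB).mono_of_mem_nhdsWithin h2
  have hint : IntervalIntegrable P MeasureTheory.volume u w :=
    (hPc.mono hsub).intervalIntegrable_of_Icc huw
  exact (intervalIntegral.integral_eq_sub_of_hasDeriv_right_of_le huw (hcont.mono hsub)
    hder' hint).symm

lemma exists_bound_abs {f : ℝ → ℝ} (hf : ContinuousOn f (Set.Icc (0:ℝ) 1)) :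
    ∃ K : ℝ, 0 ≤ K ∧ ∀ v ∈ Set.Icc (0:ℝ) 1, |f v| ≤ K := by
  obtain ⟨K, hK⟩ := isCompact_Icc.exists_bound_of_continuousOn hf
  refine ⟨max K 0, le_max_right _ _, fun v hv => ?_⟩
  calc |f v| = ‖f v‖ := (Real.norm_eq_abs _).symm
    _ ≤ K := hK v hv
    _ ≤ max K 0 := le_max_left _ _

/-! ### The crossing lemma -/

lemma crossing {f G₁ G₂ y₁ y₂ : ℝ → ℝ}
    (h₁ : Sol f G₁ y₁) (h₂ : Sol f G₂ y₂)
    (hlt : ∀ s : ℝ, 0 < s → G₁ s < G₂ s)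
    (hmono : MonotoneOn G₂ (Set.Ici 0)) :
    ∀ v ∈ Set.Ioo (0:ℝ) 1, y₂ v < y₁ v := by
  set w : ℝ → ℝ := fun v => y₂ v - y₁ v with hw
  have hwc : ContinuousOn w (Set.Icc 0 1) := h₂.cont.sub h₁.cont
  have stepA : ∀ v₀ ∈ Set.Ioo (0:ℝ) 1, 0 < w v₀ → False := by
    intro v₀ hv₀ hwv₀
    set S : Set ℝ := {v | v ∈ Set.Icc v₀ 1 ∧ w v ≤ 0} with hS
    have hS1 : (1:ℝ) ∈ S := ⟨⟨hv₀.2.le, le_refl 1⟩, by simp [hw, h₁.y1, h₂.y1]⟩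
    have hSne : S.Nonempty := ⟨1, hS1⟩
    have hSbdd : BddBelow S := ⟨v₀, fun v hv => hv.1.1⟩
    set T := sInf S with hT
    have hclosed : IsClosed S := by
      have hSeq : S = Set.Icc v₀ 1 ∩ (Set.Icc (0:ℝ) 1 ∩ w ⁻¹' Set.Iic 0) := by
        ext v
        constructor
        · rintro ⟨hv1, hv2⟩
          exact ⟨hv1, ⟨⟨le_trans hv₀.1.le hv1.1, hv1.2⟩, hv2⟩⟩
        · rintro ⟨hv1, _, hv2⟩
          exact ⟨hv1, hv2⟩
      rw [hSeq]
      exact isClosed_Icc.inter (hwc.preimage_isClosed_of_isClosed isClosed_Icc isClosed_Iic)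
    have hTS : T ∈ S := hclosed.csInf_mem hSne hSbdd
    have hT1 : T ≤ 1 := hTS.1.2
    have hv₀T : v₀ ≤ T := le_csInf hSne (fun v hv => hv.1.1)
    have hTv₀ : v₀ < T := by
      rcases eq_or_lt_of_le hv₀T with h | h
      · exfalso
        have := hTS.2
        rw [← h] at this
        linarith
      · exact h
    have hwpos : ∀ v ∈ Set.Ico v₀ T, 0 < w v := by
      intro v hv
      by_contra hc
      push_neg at hc
      have hvS : v ∈ S := ⟨⟨hv.1, le_trans hv.2.le hT1⟩, hc⟩
      have : T ≤ v := csInf_le hSbdd hvS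
      linarith [hv.2]
    have hmonoW : StrictMonoOn w (Set.Icc v₀ T) := by
      apply strictMonoOn_of_deriv_pos (convex_Icc v₀ T)
        (hwc.mono (Set.Icc_subset_Icc hv₀.1.le hT1))
      intro x hx
      rw [interior_Icc] at hx
      have hx01 : x ∈ Set.Ioo (0:ℝ) 1 := ⟨lt_trans hv₀.1 hx.1, lt_of_lt_of_le hx.2 hT1⟩
      have hxIcc : x ∈ Set.Icc (0:ℝ) 1 := Set.Ioo_subset_Icc_self hx01
      have hda : HasDerivAt w ((G₂ (y₂ x) - f x) - (G₁ (y₁ x) - f x)) x := by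
        have H2 : HasDerivAt y₂ (G₂ (y₂ x) - f x) x :=
          (h₂.dv x hxIcc).hasDerivAt (Icc_mem_nhds hx01.1 hx01.2)
        have H1 : HasDerivAt y₁ (G₁ (y₁ x) - f x) x :=
          (h₁.dv x hxIcc).hasDerivAt (Icc_mem_nhds hx01.1 hx01.2)
        exact H2.sub H1
      rw [hda.deriv]
      have hy1pos : 0 < y₁ x := h₁.pos x hx01
      have hy12 : y₁ x ≤ y₂ x := by
        have hx' : 0 < w x := hwpos x ⟨hx.1.le, hx.2⟩
        simp only [hw] at hx'
        linarith
      have hG2 : G₂ (y₁ x) ≤ G₂ (y₂ x) :=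
        hmono (le_of_lt hy1pos) (le_trans hy1pos.le hy12) hy12
      have h3 : G₁ (y₁ x) < G₂ (y₁ x) := hlt _ hy1pos
      linarith
    have hTT : w v₀ < w T :=
      hmonoW ⟨le_refl v₀, hTv₀.le⟩ ⟨hTv₀.le, le_refl T⟩ hTv₀
    have := hTS.2
    linarith
  intro v hv
  rcases lt_trichotomy (w v) 0 with h | h | h
  · simpa [hw, sub_neg] using h
  · exfalso
    have hvIcc : v ∈ Set.Icc (0:ℝ) 1 := Set.Ioo_subset_Icc_self hv
    have hyy : y₂ v = y₁ v := by
      simp only [hw] at h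
      linarith
    have hd : HasDerivWithinAt w ((G₂ (y₂ v) - f v) - (G₁ (y₁ v) - f v)) (Set.Icc 0 1) v :=
      (h₂.dv v hvIcc).sub (h₁.dv v hvIcc)
    have hdpos : 0 < (G₂ (y₂ v) - f v) - (G₁ (y₁ v) - f v) := by
      rw [hyy]
      have := hlt (y₁ v) (h₁.pos v hv)
      linarith
    obtain ⟨η, hη, hslope⟩ := slope_pos_aux hd hdpos
    set v' := min ((v + 1) / 2) (v + η / 2) with hv'
    have hv'1 : v < v' := by
      apply lt_min
      · linarith [hv.2]
      · linarith
    have hv'2 : v' < 1 := lt_of_le_of_lt (min_le_left _ _) (by linarith [hv.2])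
    have hv'3 : |v' - v| < η := by
      rw [abs_of_pos (by linarith)]
      calc v' - v ≤ (v + η / 2) - v := by
            apply sub_le_sub_right (min_le_right _ _)
        _ < η := by linarith
    have hv'Icc : v' ∈ Set.Icc (0:ℝ) 1 := ⟨by linarith [hv.1], hv'2.le⟩
    have hgt := (hslope v' hv'Icc (ne_of_gt hv'1) hv'3).1 hv'1
    exact stepA v' ⟨lt_trans hv.1 hv'1, hv'2⟩ (by rw [h] at hgt; exact hgt)
  · exact (stepA v hv h).elim

/-! ### Sign of admissible speeds -/

lemma sol_integral_zero {f G y : ℝ → ℝ} (h : Sol f G y)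
    (hf : ContinuousOn f (Set.Icc 0 1)) (hG : ContinuousOn G (Set.Ici 0)) :
    ∫ v in (0:ℝ)..1, (G (y v) - f v) = 0 := by
  have hmaps : Set.MapsTo y (Set.Icc 0 1) (Set.Ici 0) := fun v hv => h.nonneg v hv
  have hPc : ContinuousOn (fun v => G (y v) - f v) (Set.Icc 0 1) :=
    (hG.comp h.cont hmaps).sub hf
  have hKey := ftc_icc h.dv hPc (Set.left_mem_Icc.mpr zero_le_one)
    (Set.right_mem_Icc.mpr zero_le_one) zero_le_one
  rw [h.y0, h.y1] at hKey
  simpa using hKey.symm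

lemma speed_nonneg {f : ℝ → ℝ} (hH : HypH f) (hF1 : 0 ≤ Ffn f 1)
    {a b c : ℝ} (ha : 0 < a) (hb : 0 < b) {y : ℝ → ℝ}
    (h : Sol f (fun s => c * a * Rab a b s) y) : 0 ≤ c := by
  have hf := hH.1
  have hG : ContinuousOn (fun s => c * a * Rab a b s) (Set.Ici 0) :=
    continuousOn_const.mul (Rab_continuousOn ha hb)
  have hzero := sol_integral_zero h hf hG
  have hmaps : Set.MapsTo y (Set.Icc 0 1) (Set.Ici 0) := fun v hv => h.nonneg v hv
  have hRc : ContinuousOn (fun v => Rab a b (y v)) (Set.Icc 0 1) :=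
    (Rab_continuousOn ha hb).comp h.cont hmaps
  have hint1 : IntervalIntegrable (fun v => c * a * Rab a b (y v))
      MeasureTheory.volume 0 1 :=
    (continuousOn_const.mul hRc).intervalIntegrable_of_Icc zero_le_one
  have hint2 : IntervalIntegrable f MeasureTheory.volume 0 1 :=
    hf.intervalIntegrable_of_Icc zero_le_one
  have hsplit : (∫ v in (0:ℝ)..1, (c * a * Rab a b (y v) - f v))
      = (∫ v in (0:ℝ)..1, c * a * Rab a b (y v)) - ∫ v in (0:ℝ)..1, f v :=
    intervalIntegral.integral_sub hint1 hint2
  have hIpos : 0 < ∫ v in (0:ℝ)..1, Rab a b (y v) := by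
    apply intervalIntegral.intervalIntegral_pos_of_pos_on
      (hRc.intervalIntegrable_of_Icc zero_le_one)
    · intro x hx
      exact Rab_pos ha hb (h.pos x hx)
    · exact zero_lt_one
  have hconst : (∫ v in (0:ℝ)..1, c * a * Rab a b (y v))
      = c * a * ∫ v in (0:ℝ)..1, Rab a b (y v) := by
    rw [intervalIntegral.integral_const_mul]
  have hEq : c * a * (∫ v in (0:ℝ)..1, Rab a b (y v)) = Ffn f 1 := by
    rw [Ffn]
    rw [hsplit, hconst] at hzero
    linarith
  by_contra hc
  push_neg at hc
  have : c * a * (∫ v in (0:ℝ)..1, Rab a b (y v)) < 0 :=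
    mul_neg_of_neg_of_pos (mul_neg_of_neg_of_pos hc ha) hIpos
  linarith

lemma F1_nonneg {f : ℝ → ℝ} (hH : HypH f)
    (hT : TypeA f ∨ ∃ α : ℝ, TypeB f α ∨ TypeC f α) : 0 ≤ Ffn f 1 := by
  rcases hT with hA | ⟨α, hB | hC⟩
  · rw [Ffn]
    apply intervalIntegral.integral_nonneg zero_le_one
    intro u hu
    rcases eq_or_lt_of_le hu.1 with h0 | h0
    · rw [← h0, hH.2.1]
    rcases eq_or_lt_of_le hu.2 with h1 | h1
    · rw [h1, hH.2.2.1]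
    exact (hA u ⟨h0, h1⟩).le
  · rw [Ffn]
    apply intervalIntegral.integral_nonneg zero_le_one
    intro u hu
    rcases le_or_gt u α with h | h
    · rw [hB.2.1 u ⟨hu.1, h⟩]
    rcases eq_or_lt_of_le hu.2 with h1 | h1
    · rw [h1, hH.2.2.1]
    exact (hB.2.2 u ⟨h, h1⟩).le
  · exact hC.2.2.2

lemma zero_transfer {f : ℝ → ℝ} {a b a' b' : ℝ} {y : ℝ → ℝ}
    (h : Sol f (fun s => 0 * a * Rab a b s) y) :
    Sol f (fun s => 0 * a' * Rab a' b' s) y := by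
  refine ⟨h.y0, h.y1, h.pos, fun v hv => ?_⟩
  have hd := h.dv v hv
  simp only [zero_mul] at hd ⊢
  exact hd

/-! ### Lipschitz bound for the truncated right-hand side -/

lemma V_lipschitz {a' b' c m : ℝ} (ha' : 0 < a') (hb' : 0 < b') (hc : 0 < c) (hm : 0 < m)
    (f : ℝ → ℝ) (t : ℝ) :
    LipschitzWith (Real.toNNReal (c * a' / Real.sqrt (2 * a' * m)))
      (fun x => c * a' * Rab a' b' (max x m) - f t) := by
  have hsq : 0 < Real.sqrt (2 * a' * m) := Real.sqrt_pos.mpr (by positivity)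
  apply LipschitzWith.of_dist_le_mul
  intro x y
  rw [Real.dist_eq, Real.dist_eq]
  have h1 : c * a' * Rab a' b' (max x m) - f t - (c * a' * Rab a' b' (max y m) - f t)
      = c * a' * (Rab a' b' (max x m) - Rab a' b' (max y m)) := by ring
  rw [h1, abs_mul, abs_of_pos (by positivity : (0:ℝ) < c * a')]
  have h2 : |Rab a' b' (max x m) - Rab a' b' (max y m)|
      ≤ (1 / Real.sqrt (2 * a' * m)) * |max x m - max y m| :=
    Rab_lip ha' hb' hm (le_max_right x m) (le_max_right y m)
  have h3 : |max x m - max y m| ≤ |x - y| := abs_max_sub_max_le_abs x y m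
  have h4 : (Real.toNNReal (c * a' / Real.sqrt (2 * a' * m)) : ℝ)
      = c * a' / Real.sqrt (2 * a' * m) := Real.coe_toNNReal _ (by positivity)
  rw [h4]
  calc c * a' * |Rab a' b' (max x m) - Rab a' b' (max y m)|
      ≤ c * a' * ((1 / Real.sqrt (2 * a' * m)) * |x - y|) := by
        apply mul_le_mul_of_nonneg_left _ (by positivity)
        calc |Rab a' b' (max x m) - Rab a' b' (max y m)|
            ≤ (1 / Real.sqrt (2 * a' * m)) * |max x m - max y m| := h2
          _ ≤ (1 / Real.sqrt (2 * a' * m)) * |x - y| := by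
              apply mul_le_mul_of_nonneg_left h3 (by positivity)
    _ = c * a' / Real.sqrt (2 * a' * m) * |x - y| := by ring

/-! ### One backward step of the construction -/

lemma step {f Y Z : ℝ → ℝ} {a b a' b' c c' : ℝ}
    (hH : HypH f) (ha : 0 < a) (hb : 0 < b) (ha' : 0 < a') (hb' : 0 < b')
    (hc : 0 < c) (hcc : c < c')
    (hglt : ∀ s : ℝ, 0 < s → a * Rab a b s < a' * Rab a' b' s)
    (hY : Sol f (fun s => c * a * Rab a b s) Y)
    (hZ : Sol f (fun s => c' * a' * Rab a' b' s) Z)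
    (hZY : ∀ v ∈ Set.Ioo (0:ℝ) 1, Z v < Y v)
    {δ v₀ : ℝ} (hδ : 0 < δ) (hδv : δ < v₀) (hv₀ : v₀ < 1) :
    ∃ z : ℝ → ℝ, z v₀ = Y v₀ ∧
      (∀ t ∈ Set.Icc δ v₀,
        HasDerivWithinAt z (c * a' * Rab a' b' (z t) - f t) (Set.Icc δ v₀) t) ∧
      (∀ t ∈ Set.Icc δ v₀, Z t ≤ z t ∧ z t ≤ Y t) ∧
      (∀ t ∈ Set.Ico δ v₀, Z t < z t ∧ z t < Y t) := by
  have hsub01 : Set.Icc δ v₀ ⊆ Set.Icc (0:ℝ) 1 := Set.Icc_subset_Icc hδ.le hv₀.le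
  have hsubIoo : Set.Icc δ v₀ ⊆ Set.Ioo (0:ℝ) 1 :=
    fun t ht => ⟨lt_of_lt_of_le hδ ht.1, lt_of_le_of_lt ht.2 hv₀⟩
  have hv₀mem : v₀ ∈ Set.Icc δ v₀ := Set.right_mem_Icc.mpr hδv.le
  obtain ⟨p, hp, hpmin⟩ := isCompact_Icc.exists_isMinOn (Set.nonempty_Icc.mpr hδv.le)
    (hZ.cont.mono hsub01)
  set m := Z p / 2 with hm_def
  have hZp : 0 < Z p := hZ.pos p (hsubIoo hp)
  have hm : 0 < m := by positivity
  have hZm : ∀ t ∈ Set.Icc δ v₀, 2 * m ≤ Z t := by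
    intro t ht
    have h1 : Z p ≤ Z t := hpmin ht
    rw [hm_def] at *
    linarith
  obtain ⟨K, hK0, hK⟩ := exists_bound_abs hH.1
  set V : ℝ → ℝ → ℝ := fun t x => c * a' * Rab a' b' (max x m) - f t with hV_def
  set C₀ : ℝ := c * a' * (1 / b') + K with hC₀_def
  have hC₀ : 0 ≤ C₀ := by positivity
  have hVbound : ∀ t ∈ Set.Icc δ v₀, ∀ x : ℝ, |V t x| ≤ C₀ := by
    intro t ht x
    have h1 : 0 ≤ Rab a' b' (max x m) := Rab_nonneg ha' hb' (le_trans hm.le (le_max_right x m))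
    have h2 : Rab a' b' (max x m) ≤ 1 / b' :=
      Rab_le ha' hb' (le_trans hm.le (le_max_right x m))
    have h3 : |f t| ≤ K := hK t (hsub01 ht)
    have h4 : V t x = c * a' * Rab a' b' (max x m) + -(f t) := by rw [hV_def]; ring
    rw [h4]
    calc |c * a' * Rab a' b' (max x m) + -(f t)|
        ≤ |c * a' * Rab a' b' (max x m)| + |(-(f t))| := abs_add_le _ _
      _ ≤ C₀ := by
          rw [abs_neg, abs_of_nonneg (by positivity), hC₀_def]
          have h5 : c * a' * Rab a' b' (max x m) ≤ c * a' * (1 / b') :=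
            mul_le_mul_of_nonneg_left h2 (by positivity)
          linarith
  have hpl : IsPicardLindelof V (tmin := δ) (tmax := v₀) ⟨v₀, hv₀mem⟩ (Y v₀)
      ⟨C₀, hC₀⟩ 0 ⟨C₀, hC₀⟩ (Real.toNNReal (c * a' / Real.sqrt (2 * a' * m))) := by
    refine ⟨?_, ?_, ?_, ?_⟩
    · intro t ht
      exact LipschitzWith.lipschitzOnWith (V_lipschitz ha' hb' hc hm f t)
    · intro x hx
      exact continuousOn_const.sub (hH.1.mono hsub01)
    · intro t ht x hx
      rw [Real.norm_eq_abs]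
      exact hVbound t ht x
    · show C₀ * max (v₀ - v₀) (v₀ - δ) ≤ C₀ - ((0 : NNReal) : ℝ)
      rw [NNReal.coe_zero, sub_zero, sub_self]
      have hmax : max (0:ℝ) (v₀ - δ) = v₀ - δ := max_eq_right (by linarith)
      rw [hmax]
      nlinarith [mul_le_mul_of_nonneg_left (show v₀ - δ ≤ 1 by linarith) hC₀]
  obtain ⟨z, hz0, hzd⟩ : ∃ z : ℝ → ℝ, z v₀ = Y v₀ ∧ ∀ t ∈ Set.Icc δ v₀,
      HasDerivWithinAt z (V t (z t)) (Set.Icc δ v₀) t :=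
    hpl.exists_eq_forall_mem_Icc_hasDerivWithinAt₀
  have hzc : ContinuousOn z (Set.Icc δ v₀) := fun t ht => (hzd t ht).continuousWithinAt
  have hYc' : ContinuousOn Y (Set.Icc δ v₀) := hY.cont.mono hsub01
  have hZc' : ContinuousOn Z (Set.Icc δ v₀) := hZ.cont.mono hsub01
  have hYZv₀ : Z v₀ < Y v₀ := hZY v₀ (hsubIoo hv₀mem)
  -- derivative-gap statements at touching points
  have upper_gap : ∀ t ∈ Set.Icc δ v₀, z t = Y t →
      ∃ η > 0, ∀ v ∈ Set.Icc δ v₀, v ≠ t → |v - t| < η →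
        ((t < v → z t - Y t < z v - Y v) ∧ (v < t → z v - Y v < z t - Y t)) := by
    intro t ht htouch
    have hZt2m : 2 * m ≤ Z t := hZm t ht
    have hYt2m : 2 * m ≤ Y t := le_trans hZt2m (hZY t (hsubIoo ht)).le
    have hYtpos : 0 < Y t := lt_of_lt_of_le (by linarith) hYt2m
    have hd : HasDerivWithinAt (fun s => z s - Y s)
        (V t (z t) - (c * a * Rab a b (Y t) - f t)) (Set.Icc δ v₀) t :=
      (hzd t ht).sub ((hY.dv t (hsub01 ht)).mono hsub01)
    have hval : V t (z t) - (c * a * Rab a b (Y t) - f t)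
        = c * (a' * Rab a' b' (Y t)) - c * (a * Rab a b (Y t)) := by
      rw [hV_def]
      simp only []
      rw [htouch, max_eq_left (le_trans (by linarith : m ≤ 2 * m) hYt2m)]
      ring
    rw [hval] at hd
    have hpos : 0 < c * (a' * Rab a' b' (Y t)) - c * (a * Rab a b (Y t)) := by
      have hg := hglt (Y t) hYtpos
      nlinarith
    exact slope_pos_aux hd hpos
  have lower_gap : ∀ t ∈ Set.Icc δ v₀, z t = Z t →
      ∃ η > 0, ∀ v ∈ Set.Icc δ v₀, v ≠ t → |v - t| < η →
        ((t < v → z v - Z v < z t - Z t) ∧ (v < t → z t - Z t < z v - Z v)) := by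
    intro t ht htouch
    have hZt2m : 2 * m ≤ Z t := hZm t ht
    have hZtpos : 0 < Z t := lt_of_lt_of_le (by linarith) hZt2m
    have hd : HasDerivWithinAt (fun s => z s - Z s)
        (V t (z t) - (c' * a' * Rab a' b' (Z t) - f t)) (Set.Icc δ v₀) t :=
      (hzd t ht).sub ((hZ.dv t (hsub01 ht)).mono hsub01)
    have hval : V t (z t) - (c' * a' * Rab a' b' (Z t) - f t)
        = (c - c') * (a' * Rab a' b' (Z t)) := by
      rw [hV_def]
      simp only []
      rw [htouch, max_eq_left (le_trans (by linarith : m ≤ 2 * m) hZt2m)]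
      ring
    rw [hval] at hd
    have hneg : (c - c') * (a' * Rab a' b' (Z t)) < 0 :=
      mul_neg_of_neg_of_pos (by linarith) (mul_pos ha' (Rab_pos ha' hb' hZtpos))
    exact slope_neg_aux hd hneg
  -- strictness near v₀
  obtain ⟨η₁, hη₁, hsl₁⟩ := upper_gap v₀ hv₀mem hz0
  have hψ : ContinuousWithinAt (fun t => z t - Z t) (Set.Icc δ v₀) v₀ :=
    ((hzc v₀ hv₀mem).sub (hZc' v₀ hv₀mem))
  have hψpos : 0 < z v₀ - Z v₀ := by rw [hz0]; linarith
  have hev : ∀ᶠ t in 𝓝[Set.Icc δ v₀] v₀, 0 < z t - Z t :=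
    hψ.eventually (eventually_gt_nhds hψpos)
  rw [eventually_nhdsWithin_iff, Metric.eventually_nhds_iff] at hev
  obtain ⟨η₂, hη₂, hev⟩ := hev
  set η := min η₁ η₂ with hη_def
  have hηpos : 0 < η := lt_min hη₁ hη₂
  have strictnear : ∀ t ∈ Set.Icc δ v₀, v₀ - η < t → t ≠ v₀ → Z t < z t ∧ z t < Y t := by
    intro t ht h1 h2
    have htv : t < v₀ := lt_of_le_of_ne ht.2 h2
    have hdist : |t - v₀| < η := by
      rw [abs_of_neg (by linarith)]
      linarith
    constructor
    · have := hev (show dist t v₀ < η₂ by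
        rw [Real.dist_eq]; exact lt_of_lt_of_le hdist (min_le_right _ _)) ht
      linarith
    · have h3 := (hsl₁ t ht h2 (lt_of_lt_of_le hdist (min_le_left _ _))).2 htv
      have h0 : z v₀ - Y v₀ = 0 := by rw [hz0]; ring
      linarith
  -- the band
  have hband : ∀ t ∈ Set.Icc δ v₀, Z t ≤ z t ∧ z t ≤ Y t := by
    by_contra hcon
    push_neg at hcon
    obtain ⟨t₁, ht₁, ht₁'⟩ := hcon
    have ht₁E : t₁ ∈ Set.Icc δ v₀ ∧ (z t₁ < Z t₁ ∨ Y t₁ < z t₁) := by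
      refine ⟨ht₁, ?_⟩
      by_cases h : z t₁ < Z t₁
      · exact Or.inl h
      · push_neg at h
        exact Or.inr (ht₁' h)
    set E := {t | t ∈ Set.Icc δ v₀ ∧ (z t < Z t ∨ Y t < z t)} with hE_def
    have hEne : E.Nonempty := ⟨t₁, ht₁E⟩
    have hEub : ∀ t ∈ E, t ≤ v₀ - η := by
      intro t ht
      by_contra hgt
      push_neg at hgt
      rcases eq_or_ne t v₀ with he | hne
      · rcases ht.2 with h | h
        · rw [he, hz0] at h
          linarith
        · rw [he, hz0] at h
          linarith
      · have hs := strictnear t ht.1 (by linarith) hne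
        rcases ht.2 with h | h
        · linarith [hs.1]
        · linarith [hs.2]
    have hEbdd : BddAbove E := ⟨v₀ - η, hEub⟩
    set T := sSup E with hT_def
    have hTub : T ≤ v₀ - η := csSup_le hEne hEub
    have hTv₀ : T < v₀ := by linarith
    have hTlb : δ ≤ T := le_trans ht₁E.1.1 (le_csSup hEbdd ht₁E)
    have hTmem : T ∈ Set.Icc δ v₀ := ⟨hTlb, by linarith⟩
    have hsub2 : Set.Ioc T v₀ ⊆ Set.Icc δ v₀ := fun x hx => ⟨le_trans hTlb hx.1.le, hx.2⟩
    have hrb : ∀ t ∈ Set.Ioc T v₀, Z t ≤ z t ∧ z t ≤ Y t := by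
      intro t ht
      have htIcc : t ∈ Set.Icc δ v₀ := hsub2 ht
      by_contra hq
      push_neg at hq
      have htE : t ∈ E := by
        refine ⟨htIcc, ?_⟩
        by_cases h : z t < Z t
        · exact Or.inl h
        · push_neg at h
          exact Or.inr (hq h)
      have := le_csSup hEbdd htE
      linarith [ht.1]
    have hne2 : (𝓝[Set.Ioc T v₀] T).NeBot := by
      apply mem_closure_iff_nhdsWithin_neBot.mp
      rw [closure_Ioc (ne_of_lt hTv₀)]
      exact Set.left_mem_Icc.mpr hTv₀.le
    have hTband : Z T ≤ z T ∧ z T ≤ Y T := by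
      constructor
      · have htd : Filter.Tendsto (fun t => z t - Z t) (𝓝[Set.Ioc T v₀] T)
            (𝓝 (z T - Z T)) := ((hzc T hTmem).sub (hZc' T hTmem)).mono hsub2
        have h1 : 0 ≤ z T - Z T := by
          apply ge_of_tendsto htd
          apply Filter.eventually_of_mem self_mem_nhdsWithin
          intro x hx
          linarith [(hrb x hx).1]
        linarith
      · have htd : Filter.Tendsto (fun t => Y t - z t) (𝓝[Set.Ioc T v₀] T)
            (𝓝 (Y T - z T)) := ((hYc' T hTmem).sub (hzc T hTmem)).mono hsub2
        have h1 : 0 ≤ Y T - z T := by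
          apply ge_of_tendsto htd
          apply Filter.eventually_of_mem self_mem_nhdsWithin
          intro x hx
          linarith [(hrb x hx).2]
        linarith
    have hTcl : T ∈ closure E := csSup_mem_closure hEne hEbdd
    have hEsplit : E = {t | t ∈ Set.Icc δ v₀ ∧ z t < Z t}
        ∪ {t | t ∈ Set.Icc δ v₀ ∧ Y t < z t} := by
      ext t
      constructor
      · rintro ⟨h1, h2 | h2⟩
        · exact Or.inl ⟨h1, h2⟩
        · exact Or.inr ⟨h1, h2⟩
      · rintro (⟨h1, h2⟩ | ⟨h1, h2⟩)
        · exact ⟨h1, Or.inl h2⟩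
        · exact ⟨h1, Or.inr h2⟩
    rw [hEsplit, closure_union] at hTcl
    rcases hTcl with hlo | hhi
    · have hclosed : IsClosed (Set.Icc δ v₀ ∩ (fun t => z t - Z t) ⁻¹' Set.Iic 0) :=
        (hzc.sub hZc').preimage_isClosed_of_isClosed isClosed_Icc isClosed_Iic
      have hTlo : z T ≤ Z T := by
        have hsubset : {t | t ∈ Set.Icc δ v₀ ∧ z t < Z t}
            ⊆ Set.Icc δ v₀ ∩ (fun t => z t - Z t) ⁻¹' Set.Iic 0 :=
          fun x hx => ⟨hx.1, by simp only [Set.mem_preimage, Set.mem_Iic]; linarith [hx.2]⟩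
        have hmem := closure_minimal hsubset hclosed hlo
        have := hmem.2
        simp only [Set.mem_preimage, Set.mem_Iic] at this
        linarith
      have htouch : z T = Z T := le_antisymm hTlo hTband.1
      obtain ⟨η₃, hη₃, hsl₃⟩ := lower_gap T hTmem htouch
      set v := min (T + η₃ / 2) ((T + v₀) / 2) with hv_def
      have hvT : T < v := lt_min (by linarith) (by linarith)
      have hvv₀ : v < v₀ := lt_of_le_of_lt (min_le_right _ _) (by linarith)
      have hvmem : v ∈ Set.Icc δ v₀ := ⟨by linarith, hvv₀.le⟩
      have hvdist : |v - T| < η₃ := by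
        rw [abs_of_pos (by linarith)]
        calc v - T ≤ T + η₃ / 2 - T := sub_le_sub_right (min_le_left _ _) T
          _ < η₃ := by linarith
      have hlt := (hsl₃ v hvmem (ne_of_gt hvT) hvdist).1 hvT
      have h0 : z T - Z T = 0 := by rw [htouch]; ring
      have hb2 := (hrb v ⟨hvT, hvv₀.le⟩).1
      linarith
    · have hclosed : IsClosed (Set.Icc δ v₀ ∩ (fun t => Y t - z t) ⁻¹' Set.Iic 0) :=
        (hYc'.sub hzc).preimage_isClosed_of_isClosed isClosed_Icc isClosed_Iic
      have hThi : Y T ≤ z T := by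
        have hsubset : {t | t ∈ Set.Icc δ v₀ ∧ Y t < z t}
            ⊆ Set.Icc δ v₀ ∩ (fun t => Y t - z t) ⁻¹' Set.Iic 0 :=
          fun x hx => ⟨hx.1, by simp only [Set.mem_preimage, Set.mem_Iic]; linarith [hx.2]⟩
        have hmem := closure_minimal hsubset hclosed hhi
        have := hmem.2
        simp only [Set.mem_preimage, Set.mem_Iic] at this
        linarith
      have htouch : z T = Y T := le_antisymm hTband.2 hThi
      obtain ⟨η₃, hη₃, hsl₃⟩ := upper_gap T hTmem htouch
      set v := min (T + η₃ / 2) ((T + v₀) / 2) with hv_def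
      have hvT : T < v := lt_min (by linarith) (by linarith)
      have hvv₀ : v < v₀ := lt_of_le_of_lt (min_le_right _ _) (by linarith)
      have hvmem : v ∈ Set.Icc δ v₀ := ⟨by linarith, hvv₀.le⟩
      have hvdist : |v - T| < η₃ := by
        rw [abs_of_pos (by linarith)]
        calc v - T ≤ T + η₃ / 2 - T := sub_le_sub_right (min_le_left _ _) T
          _ < η₃ := by linarith
      have hgt := (hsl₃ v hvmem (ne_of_gt hvT) hvdist).1 hvT
      have h0 : z T - Y T = 0 := by rw [htouch]; ring
      have hb2 := (hrb v ⟨hvT, hvv₀.le⟩).2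
      linarith
  -- strict band on Ico
  have hstrict : ∀ t ∈ Set.Ico δ v₀, Z t < z t ∧ z t < Y t := by
    intro t ht
    have htIcc : t ∈ Set.Icc δ v₀ := ⟨ht.1, ht.2.le⟩
    have hb1 := hband t htIcc
    constructor
    · rcases eq_or_lt_of_le hb1.1 with he | h
      · exfalso
        obtain ⟨η₃, hη₃, hsl₃⟩ := lower_gap t htIcc he.symm
        set v := min (t + η₃ / 2) ((t + v₀) / 2) with hv_def
        have hvt : t < v := lt_min (by linarith) (by linarith [ht.2])
        have hvv₀ : v < v₀ := lt_of_le_of_lt (min_le_right _ _) (by linarith [ht.2])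
        have hvmem : v ∈ Set.Icc δ v₀ := ⟨by linarith [ht.1], hvv₀.le⟩
        have hvdist : |v - t| < η₃ := by
          rw [abs_of_pos (by linarith)]
          calc v - t ≤ t + η₃ / 2 - t := sub_le_sub_right (min_le_left _ _) t
            _ < η₃ := by linarith
        have hlt := (hsl₃ v hvmem (ne_of_gt hvt) hvdist).1 hvt
        have h0 : z t - Z t = 0 := by rw [he]; ring
        have hb2 := (hband v hvmem).1
        linarith
      · exact h
    · rcases eq_or_lt_of_le hb1.2 with he | h
      · exfalso
        obtain ⟨η₃, hη₃, hsl₃⟩ := upper_gap t htIcc he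
        set v := min (t + η₃ / 2) ((t + v₀) / 2) with hv_def
        have hvt : t < v := lt_min (by linarith) (by linarith [ht.2])
        have hvv₀ : v < v₀ := lt_of_le_of_lt (min_le_right _ _) (by linarith [ht.2])
        have hvmem : v ∈ Set.Icc δ v₀ := ⟨by linarith [ht.1], hvv₀.le⟩
        have hvdist : |v - t| < η₃ := by
          rw [abs_of_pos (by linarith)]
          calc v - t ≤ t + η₃ / 2 - t := sub_le_sub_right (min_le_left _ _) t
            _ < η₃ := by linarith
        have hgt := (hsl₃ v hvmem (ne_of_gt hvt) hvdist).1 hvt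
        have h0 : z t - Y t = 0 := by rw [he]; ring
        have hb2 := (hband v hvmem).2
        linarith
      · exact h
  have htrue : ∀ t ∈ Set.Icc δ v₀,
      HasDerivWithinAt z (c * a' * Rab a' b' (z t) - f t) (Set.Icc δ v₀) t := by
    intro t ht
    have hd := hzd t ht
    have hcollapse : max (z t) m = z t :=
      max_eq_left (le_trans (by linarith : m ≤ 2 * m)
        (le_trans (hZm t ht) (hband t ht).1))
    rw [hV_def] at hd
    simp only [] at hd
    rw [hcollapse] at hd
    exact hd
  exact ⟨z, hz0, htrue, hband, hstrict⟩

/-! ### The limit construction: transfer of an admissible speed to larger damping -/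

lemma construct {f Y Z : ℝ → ℝ} {a b a' b' c c' : ℝ}
    (hH : HypH f) (ha : 0 < a) (hb : 0 < b) (ha' : 0 < a') (hb' : 0 < b')
    (hc : 0 < c) (hcc : c < c')
    (hglt : ∀ s : ℝ, 0 < s → a * Rab a b s < a' * Rab a' b' s)
    (hY : Sol f (fun s => c * a * Rab a b s) Y)
    (hZ : Sol f (fun s => c' * a' * Rab a' b' s) Z)
    (hZY : ∀ v ∈ Set.Ioo (0:ℝ) 1, Z v < Y v) :
    ∃ w : ℝ → ℝ, Sol f (fun s => c * a' * Rab a' b' s) w := by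
  classical
  set dd : ℕ → ℝ := fun n => 1 / (n + 3) with hdd_def
  set vv : ℕ → ℝ := fun n => 1 - 1 / (n + 3) with hvv_def
  have hddpos : ∀ n : ℕ, 0 < dd n := by
    intro n
    have : (0:ℝ) < (n:ℝ) + 3 := by positivity
    positivity
  have hdd3 : ∀ n : ℕ, dd n ≤ 1 / 3 := by
    intro n
    rw [hdd_def]
    simp only []
    rw [div_le_div_iff₀ (by positivity) (by norm_num)]
    have := n.cast_nonneg (α := ℝ)
    linarith
  have hδv : ∀ n : ℕ, dd n < vv n := by
    intro n
    have h1 := hdd3 n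
    have h2 := hddpos n
    rw [hvv_def]
    simp only []
    have : dd n = 1 / ((n:ℝ) + 3) := rfl
    linarith [hdd3 n]
  have hv1 : ∀ n : ℕ, vv n < 1 := by
    intro n
    have := hddpos n
    rw [hvv_def]
    simp only []
    have : dd n = 1 / ((n:ℝ) + 3) := rfl
    linarith
  have hdd_anti : ∀ p q : ℕ, p ≤ q → dd q ≤ dd p := by
    intro p q hpq
    apply one_div_le_one_div_of_le (by positivity)
    have : (p:ℝ) ≤ (q:ℝ) := Nat.cast_le.mpr hpq
    linarith
  have hvv_mono : ∀ p q : ℕ, p ≤ q → vv p ≤ vv q := by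
    intro p q hpq
    have := hdd_anti p q hpq
    rw [hvv_def]
    simp only []
    have h1 : dd q = 1 / ((q:ℝ) + 3) := rfl
    have h2 : dd p = 1 / ((p:ℝ) + 3) := rfl
    linarith
  have hvv_strict : ∀ p q : ℕ, p < q → vv p < vv q := by
    intro p q hpq
    have h1 : (p:ℝ) + 3 < (q:ℝ) + 3 := by
      have : (p:ℝ) < (q:ℝ) := Nat.cast_lt.mpr hpq
      linarith
    have h2 : 1 / ((q:ℝ) + 3) < 1 / ((p:ℝ) + 3) :=
      one_div_lt_one_div_of_lt (by positivity) h1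
    rw [hvv_def]
    simp only []
    linarith
  have hsubIoo : ∀ n : ℕ, Set.Icc (dd n) (vv n) ⊆ Set.Ioo (0:ℝ) 1 :=
    fun n t ht => ⟨lt_of_lt_of_le (hddpos n) ht.1, lt_of_le_of_lt ht.2 (hv1 n)⟩
  -- the approximating solutions
  have hstep : ∀ n : ℕ, ∃ z : ℝ → ℝ, z (vv n) = Y (vv n) ∧
      (∀ t ∈ Set.Icc (dd n) (vv n),
        HasDerivWithinAt z (c * a' * Rab a' b' (z t) - f t) (Set.Icc (dd n) (vv n)) t) ∧
      (∀ t ∈ Set.Icc (dd n) (vv n), Z t ≤ z t ∧ z t ≤ Y t) ∧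
      (∀ t ∈ Set.Ico (dd n) (vv n), Z t < z t ∧ z t < Y t) :=
    fun n => step hH ha hb ha' hb' hc hcc hglt hY hZ hZY (hddpos n) (hδv n) (hv1 n)
  choose z hz0 hzd hzb hzs using hstep
  have hzc : ∀ n, ContinuousOn (z n) (Set.Icc (dd n) (vv n)) :=
    fun n t ht => (hzd n t ht).continuousWithinAt
  -- comparison between approximations
  have hIci : ∀ {A B t : ℝ}, t ∈ Set.Ico A B → Set.Icc A B ∈ 𝓝[Set.Ici t] t := by
    intro A B t ht
    apply Filter.mem_of_superset (Icc_mem_nhdsGE_of_mem ⟨le_refl t, ht.2⟩)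
    exact Set.Icc_subset_Icc ht.1 (le_refl B)
  have hcomp : ∀ p q : ℕ, p < q → ∀ t ∈ Set.Icc (dd p) (vv p), z q t ≤ z p t := by
    intro p q hpq
    by_contra hcon
    push_neg at hcon
    obtain ⟨u, hu, hu'⟩ := hcon
    have hsubpq : Set.Icc (dd p) (vv p) ⊆ Set.Icc (dd q) (vv q) :=
      Set.Icc_subset_Icc (hdd_anti p q hpq.le) (hvv_mono p q hpq.le)
    have hvpq : vv p < vv q := hvv_strict p q hpq
    have hvp_mem_q : vv p ∈ Set.Ico (dd q) (vv q) :=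
      ⟨le_trans (hdd_anti p q hpq.le) (hδv p).le, hvpq⟩
    have h1 : z q (vv p) < Y (vv p) := (hzs q (vv p) hvp_mem_q).2
    have h2 : z q (vv p) < z p (vv p) := by
      rw [hz0 p]
      exact h1
    have huvp : u < vv p := by
      rcases eq_or_lt_of_le hu.2 with he | hlt
      · exfalso
        rw [he] at hu'
        linarith
      · exact hlt
    -- a crossing point
    have hDcont : ContinuousOn (fun t => z q t - z p t) (Set.Icc u (vv p)) :=
      ((hzc q).mono (fun x hx => hsubpq ⟨le_trans hu.1 hx.1, hx.2⟩)).sub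
        ((hzc p).mono (fun x hx => ⟨le_trans hu.1 hx.1, hx.2⟩))
    have hIVT := intermediate_value_Icc' huvp.le hDcont
    have h0mem : (0:ℝ) ∈ Set.Icc (z q (vv p) - z p (vv p)) (z q u - z p u) :=
      ⟨by linarith, by linarith⟩
    obtain ⟨vb, hvbmem, hvb⟩ := hIVT h0mem
    -- uniqueness on [vb, vv p]
    obtain ⟨pm, hpm, hpmmin⟩ := isCompact_Icc.exists_isMinOn
      (Set.nonempty_Icc.mpr (hδv p).le)
      (hZ.cont.mono (Set.Icc_subset_Icc (hddpos p).le (hv1 p).le))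
    set ms := Z pm / 2 with hms_def
    have hZpm : 0 < Z pm := hZ.pos pm (hsubIoo p hpm)
    have hms : 0 < ms := by positivity
    have hZms : ∀ t ∈ Set.Icc (dd p) (vv p), 2 * ms ≤ Z t := by
      intro t ht
      have h4 : Z pm ≤ Z t := hpmmin ht
      rw [hms_def]
      linarith
    have hvbIcc : Set.Icc vb (vv p) ⊆ Set.Icc (dd p) (vv p) :=
      Set.Icc_subset_Icc (le_trans hu.1 hvbmem.1) (le_refl _)
    set W : ℝ → ℝ → ℝ := fun t x => c * a' * Rab a' b' (max x ms) - f t with hW_def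
    have hWlip : ∀ t : ℝ, LipschitzOnWith
        (Real.toNNReal (c * a' / Real.sqrt (2 * a' * ms))) (W t) Set.univ :=
      fun t => (V_lipschitz ha' hb' hc hms f t).lipschitzOnWith
    have hderivW : ∀ (r : ℕ) (hr : ∀ x ∈ Set.Icc (dd p) (vv p),
          x ∈ Set.Icc (dd r) (vv r)),
        ∀ t ∈ Set.Ico vb (vv p), HasDerivWithinAt (z r) (W t (z r t)) (Set.Ici t) t := by
      intro r hr t ht
      have htp : t ∈ Set.Icc (dd p) (vv p) := hvbIcc ⟨ht.1, ht.2.le⟩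
      have htr : t ∈ Set.Icc (dd r) (vv r) := hr t htp
      have hd := hzd r t htr
      have hcollapse : max (z r t) ms = z r t :=
        max_eq_left (le_trans (by linarith : ms ≤ 2 * ms)
          (le_trans (hZms t htp) (hzb r t htr).1))
      have hval : W t (z r t) = c * a' * Rab a' b' (z r t) - f t := by
        rw [hW_def]
        simp only []
        rw [hcollapse]
      rw [hval]
      apply hd.mono_of_mem_nhdsWithin
      apply Filter.mem_of_superset (Icc_mem_nhdsGE_of_mem
        (⟨le_refl t, lt_of_lt_of_le ht.2 (hr (vv p) (Set.right_mem_Icc.mpr (hδv p).le)).2⟩ :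
          t ∈ Set.Ico t (vv r)))
      exact Set.Icc_subset_Icc htr.1 (le_refl _)
    have hEq := ODE_solution_unique_of_mem_Icc_right (v := W)
      (s := fun _ => (Set.univ : Set ℝ)) (fun t _ => hWlip t)
      (((hzc p).mono hvbIcc))
      (hderivW p (fun x hx => hx))
      (fun t _ => Set.mem_univ _)
      (((hzc q).mono (fun x hx => hsubpq (hvbIcc hx))))
      (hderivW q (fun x hx => hsubpq hx))
      (fun t _ => Set.mem_univ _)
      (show z p vb = z q vb by
        have h3 : z q vb - z p vb = 0 := hvb
        linarith)
    have := hEq (Set.right_mem_Icc.mpr hvbmem.2)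
    rw [this] at h2
    exact lt_irrefl _ h2
  -- extended approximations
  set Zf : ℕ → ℝ → ℝ :=
    fun n t => if t ∈ Set.Icc (dd n) (vv n) then z n t else Y t with hZf_def
  have hZf_in : ∀ n t, t ∈ Set.Icc (dd n) (vv n) → Zf n t = z n t := by
    intro n t ht
    rw [hZf_def]
    simp only [if_pos ht]
  have hZf_out : ∀ n t, t ∉ Set.Icc (dd n) (vv n) → Zf n t = Y t := by
    intro n t ht
    rw [hZf_def]
    simp only [if_neg ht]
  have hZf_band : ∀ n t, t ∈ Set.Ioo (0:ℝ) 1 → Z t ≤ Zf n t ∧ Zf n t ≤ Y t := by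
    intro n t ht
    by_cases h : t ∈ Set.Icc (dd n) (vv n)
    · rw [hZf_in n t h]
      exact (hzb n t h)
    · rw [hZf_out n t h]
      exact ⟨(hZY t ht).le, le_refl _⟩
  have hZf_anti : Antitone (fun n => Zf n) := by
    intro p q hpq
    rcases eq_or_lt_of_le hpq with rfl | hlt
    · exact le_refl _
    intro t
    show Zf q t ≤ Zf p t
    by_cases hp : t ∈ Set.Icc (dd p) (vv p)
    · have hq : t ∈ Set.Icc (dd q) (vv q) :=
        Set.Icc_subset_Icc (hdd_anti p q hpq) (hvv_mono p q hpq) hp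
      rw [hZf_in p t hp, hZf_in q t hq]
      exact hcomp p q hlt t hp
    · by_cases hq : t ∈ Set.Icc (dd q) (vv q)
      · rw [hZf_out p t hp, hZf_in q t hq]
        exact (hzb q t hq).2
      · rw [hZf_out p t hp, hZf_out q t hq]
  have hZf_bdd : ∀ t, BddBelow (Set.range fun n => Zf n t) := by
    intro t
    by_cases ht : t ∈ Set.Ioo (0:ℝ) 1
    · refine ⟨Z t, ?_⟩
      rintro x ⟨n, rfl⟩
      exact (hZf_band n t ht).1
    · refine ⟨Y t, ?_⟩
      rintro x ⟨n, rfl⟩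
      have h5 : t ∉ Set.Icc (dd n) (vv n) := fun hc => ht (hsubIoo n hc)
      show Y t ≤ Zf n t
      rw [hZf_out n t h5]
  set w : ℝ → ℝ := fun t => ⨅ n, Zf n t with hw_def
  have hw_tendsto : ∀ t, Filter.Tendsto (fun n => Zf n t) Filter.atTop (𝓝 (w t)) :=
    fun t => tendsto_atTop_ciInf (fun p q hpq => hZf_anti hpq t) (hZf_bdd t)
  have hw_le : ∀ t (n : ℕ), w t ≤ Zf n t := fun t n => ciInf_le (hZf_bdd t) n
  have hw_band : ∀ t ∈ Set.Ioo (0:ℝ) 1, Z t ≤ w t ∧ w t ≤ Y t := by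
    intro t ht
    constructor
    · exact le_ciInf (fun n => (hZf_band n t ht).1)
    · exact le_trans (hw_le t 0) (hZf_band 0 t ht).2
  have hw0 : w 0 = 0 := by
    have : ∀ n : ℕ, Zf n 0 = 0 := by
      intro n
      have h1 : (0:ℝ) ∉ Set.Icc (dd n) (vv n) := by
        intro hc
        exact absurd hc.1 (not_le.mpr (hddpos n))
      rw [hZf_out n 0 h1, hY.y0]
    rw [hw_def]
    simp only [this]
    exact ciInf_const
  have hw1 : w 1 = 0 := by
    have : ∀ n : ℕ, Zf n 1 = 0 := by
      intro n
      have h1 : (1:ℝ) ∉ Set.Icc (dd n) (vv n) := by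
        intro hc
        exact absurd hc.2 (not_le.mpr (hv1 n))
      rw [hZf_out n 1 h1, hY.y1]
    rw [hw_def]
    simp only [this]
    exact ciInf_const
  have hsub01n : ∀ n : ℕ, Set.Icc (dd n) (vv n) ⊆ Set.Icc (0:ℝ) 1 :=
    fun n x hx => Set.Ioo_subset_Icc_self (hsubIoo n hx)
  -- eventual domain membership
  have hNex : ∀ t ∈ Set.Ioo (0:ℝ) 1, ∃ N : ℕ, ∀ n, N ≤ n → t ∈ Set.Icc (dd n) (vv n) := by
    intro t ht
    obtain ⟨N, hN⟩ := exists_nat_gt (max (1 / t) (1 / (1 - t)))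
    refine ⟨N, fun n hn => ?_⟩
    have hn3 : max (1 / t) (1 / (1 - t)) < (n:ℝ) + 3 := by
      have : (N:ℝ) ≤ (n:ℝ) := Nat.cast_le.mpr hn
      linarith
    have ht0 : 0 < t := ht.1
    have ht1 : 0 < 1 - t := by linarith [ht.2]
    constructor
    · show 1 / ((n:ℝ) + 3) ≤ t
      have h1 : 1 / t < (n:ℝ) + 3 := lt_of_le_of_lt (le_max_left _ _) hn3
      have h2 : 1 < ((n:ℝ) + 3) * t := by
        rw [div_lt_iff₀ ht0] at h1
        linarith
      rw [div_le_iff₀ (by positivity)]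
      nlinarith
    · show t ≤ 1 - 1 / ((n:ℝ) + 3)
      have h1 : 1 / (1 - t) < (n:ℝ) + 3 := lt_of_le_of_lt (le_max_right _ _) hn3
      have h2 : 1 < ((n:ℝ) + 3) * (1 - t) := by
        rw [div_lt_iff₀ ht1] at h1
        linarith
      have h3 : 1 / ((n:ℝ) + 3) ≤ 1 - t := by
        rw [div_le_iff₀ (by positivity)]
        nlinarith
      linarith
  -- uniform bound for the integrand
  obtain ⟨K, hK0, hK⟩ := exists_bound_abs hH.1
  set C₀ : ℝ := c * a' * (1 / b') + K with hC₀_def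
  have hC₀ : 0 ≤ C₀ := by positivity
  have hFb : ∀ t ∈ Set.Icc (0:ℝ) 1, ∀ x : ℝ, 0 ≤ x →
      |c * a' * Rab a' b' x - f t| ≤ C₀ := by
    intro t ht x hx
    have h1 : 0 ≤ Rab a' b' x := Rab_nonneg ha' hb' hx
    have h2 : Rab a' b' x ≤ 1 / b' := Rab_le ha' hb' hx
    have h3 : |f t| ≤ K := hK t ht
    have h4 : c * a' * Rab a' b' x - f t = c * a' * Rab a' b' x + -(f t) := by ring
    rw [h4]
    calc |c * a' * Rab a' b' x + -(f t)|
        ≤ |c * a' * Rab a' b' x| + |(-(f t))| := abs_add_le _ _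
      _ ≤ C₀ := by
          rw [abs_neg, abs_of_nonneg (by positivity), hC₀_def]
          have h5 : c * a' * Rab a' b' x ≤ c * a' * (1 / b') :=
            mul_le_mul_of_nonneg_left h2 (by positivity)
          linarith
  have hΦc : ContinuousOn (fun s : ℝ => c * a' * Rab a' b' s) (Set.Ici 0) :=
    continuousOn_const.mul (Rab_continuousOn ha' hb')
  -- the integral equation for the limit
  have hinteq : ∀ u u' : ℝ, u ∈ Set.Ioo (0:ℝ) 1 → u' ∈ Set.Ioo (0:ℝ) 1 → u ≤ u' →
      w u' - w u = ∫ s in u..u', (c * a' * Rab a' b' (w s) - f s) := by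
    intro u u' hu hu' huu
    obtain ⟨N₁, hN₁⟩ := hNex u hu
    obtain ⟨N₂, hN₂⟩ := hNex u' hu'
    set N := max N₁ N₂ with hN_def
    have heqn : ∀ n, N ≤ n →
        Zf n u' - Zf n u = ∫ s in u..u', (c * a' * Rab a' b' (Zf n s) - f s) := by
      intro n hn
      have hun : u ∈ Set.Icc (dd n) (vv n) := hN₁ n (le_trans (le_max_left _ _) hn)
      have hu'n : u' ∈ Set.Icc (dd n) (vv n) := hN₂ n (le_trans (le_max_right _ _) hn)
      have hsubn : Set.Icc u u' ⊆ Set.Icc (dd n) (vv n) := Set.Icc_subset_Icc hun.1 hu'n.2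
      have hznn : ∀ x ∈ Set.Icc (dd n) (vv n), 0 ≤ z n x :=
        fun x hx => le_trans (hZ.nonneg x (hsub01n n hx)) (hzb n x hx).1
      have hPc : ContinuousOn (fun s => c * a' * Rab a' b' (z n s) - f s)
          (Set.Icc (dd n) (vv n)) := by
        apply ContinuousOn.sub
        · exact hΦc.comp (hzc n) (fun x hx => hznn x hx)
        · exact hH.1.mono (hsub01n n)
      have hftc := ftc_icc (hzd n) hPc hun hu'n huu
      rw [hZf_in n u hun, hZf_in n u' hu'n, hftc]
      apply intervalIntegral.integral_congr
      intro x hx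
      rw [Set.uIcc_of_le huu] at hx
      show c * a' * Rab a' b' (z n x) - f x = c * a' * Rab a' b' (Zf n x) - f x
      rw [hZf_in n x (hsubn hx)]
    have hL : Filter.Tendsto (fun n => Zf n u' - Zf n u) Filter.atTop (𝓝 (w u' - w u)) :=
      (hw_tendsto u').sub (hw_tendsto u)
    have hR : Filter.Tendsto
        (fun n => ∫ s in u..u', (c * a' * Rab a' b' (Zf n s) - f s)) Filter.atTop
        (𝓝 (∫ s in u..u', (c * a' * Rab a' b' (w s) - f s))) := by
      apply intervalIntegral.tendsto_integral_filter_of_dominated_convergence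
        (bound := fun _ => C₀)
      · filter_upwards [Filter.eventually_ge_atTop N] with n hn
        have hun : u ∈ Set.Icc (dd n) (vv n) := hN₁ n (le_trans (le_max_left _ _) hn)
        have hu'n : u' ∈ Set.Icc (dd n) (vv n) := hN₂ n (le_trans (le_max_right _ _) hn)
        have hsubn : Set.Icc u u' ⊆ Set.Icc (dd n) (vv n) := Set.Icc_subset_Icc hun.1 hu'n.2
        have hcZf : ContinuousOn (Zf n) (Set.Icc u u') :=
          ((hzc n).mono hsubn).congr (fun x hx => hZf_in n x (hsubn hx))
        have hcF : ContinuousOn (fun s => c * a' * Rab a' b' (Zf n s) - f s)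
            (Set.Icc u u') := by
          apply ContinuousOn.sub
          · apply hΦc.comp hcZf
            intro x hx
            rw [hZf_in n x (hsubn hx)]
            exact le_trans (hZ.nonneg x (hsub01n n (hsubn hx))) (hzb n x (hsubn hx)).1
          · exact hH.1.mono (fun x hx => hsub01n n (hsubn hx))
        have hmeas1 : MeasureTheory.AEStronglyMeasurable
            (fun s => c * a' * Rab a' b' (Zf n s) - f s)
            (MeasureTheory.volume.restrict (Set.Ioc u u')) :=
          (hcF.mono Set.Ioc_subset_Icc_self).aestronglyMeasurable measurableSet_Ioc
        rw [Set.uIoc_of_le huu]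
        exact hmeas1
      · filter_upwards [Filter.eventually_ge_atTop N] with n hn
        apply MeasureTheory.ae_of_all
        intro x hx
        rw [Set.uIoc_of_le huu] at hx
        have hx01 : x ∈ Set.Ioo (0:ℝ) 1 := ⟨lt_trans hu.1 hx.1, lt_of_le_of_lt hx.2 hu'.2⟩
        have hZfx : 0 ≤ Zf n x :=
          le_trans (hZ.nonneg x (Set.Ioo_subset_Icc_self hx01)) (hZf_band n x hx01).1
        rw [Real.norm_eq_abs]
        exact hFb x (Set.Ioo_subset_Icc_self hx01) (Zf n x) hZfx
      · exact intervalIntegrable_const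
      · apply MeasureTheory.ae_of_all
        intro x hx
        rw [Set.uIoc_of_le huu] at hx
        have hx01 : x ∈ Set.Ioo (0:ℝ) 1 := ⟨lt_trans hu.1 hx.1, lt_of_le_of_lt hx.2 hu'.2⟩
        have hwx0 : 0 ≤ w x :=
          le_trans (hZ.nonneg x (Set.Ioo_subset_Icc_self hx01)) (hw_band x hx01).1
        have h6 : Filter.Tendsto (fun n => Rab a' b' (Zf n x)) Filter.atTop
            (𝓝 (Rab a' b' (w x))) :=
          (Rab_continuousAt ha' hb' hwx0).tendsto.comp (hw_tendsto x)
        exact (h6.const_mul (c * a')).sub_const (f x)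
    refine tendsto_nhds_unique hL (Filter.Tendsto.congr' ?_ hR)
    filter_upwards [Filter.eventually_ge_atTop N] with n hn
    exact (heqn n hn).symm
  -- Lipschitz estimate and continuity of the limit in the interior
  have hwlip : ∀ x ∈ Set.Ioo (0:ℝ) 1, ∀ y' ∈ Set.Ioo (0:ℝ) 1,
      |w x - w y'| ≤ C₀ * |x - y'| := by
    have key : ∀ x ∈ Set.Ioo (0:ℝ) 1, ∀ y' ∈ Set.Ioo (0:ℝ) 1, y' ≤ x →
        |w x - w y'| ≤ C₀ * |x - y'| := by
      intro x hx y' hy' hle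
      rw [hinteq y' x hy' hx hle]
      have hbd : ∀ s ∈ Set.uIoc y' x, ‖c * a' * Rab a' b' (w s) - f s‖ ≤ C₀ := by
        intro s hs
        rw [Set.uIoc_of_le hle] at hs
        have hs01 : s ∈ Set.Ioo (0:ℝ) 1 := ⟨lt_trans hy'.1 hs.1, lt_of_le_of_lt hs.2 hx.2⟩
        have hws0 : 0 ≤ w s :=
          le_trans (hZ.nonneg s (Set.Ioo_subset_Icc_self hs01)) (hw_band s hs01).1
        rw [Real.norm_eq_abs]
        exact hFb s (Set.Ioo_subset_Icc_self hs01) (w s) hws0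
      have := intervalIntegral.norm_integral_le_of_norm_le_const hbd
      rw [Real.norm_eq_abs] at this
      calc |∫ s in y'..x, (c * a' * Rab a' b' (w s) - f s)| ≤ C₀ * |x - y'| := this
        _ = C₀ * |x - y'| := rfl
    intro x hx y' hy'
    rcases le_total y' x with hle | hle
    · exact key x hx y' hy' hle
    · rw [abs_sub_comm (w x) (w y'), abs_sub_comm x y']
      exact key y' hy' x hx hle
  have hwcontAt : ∀ t ∈ Set.Ioo (0:ℝ) 1, ContinuousAt w t := by
    intro t ht
    rw [Metric.continuousAt_iff]
    intro ε hε
    refine ⟨min (min (t / 2) ((1 - t) / 2)) (ε / (C₀ + 1)), ?_, ?_⟩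
    · have h1 : 0 < t / 2 := by linarith [ht.1]
      have h2 : 0 < (1 - t) / 2 := by linarith [ht.2]
      have h3 : 0 < ε / (C₀ + 1) := by positivity
      exact lt_min (lt_min h1 h2) h3
    · intro x hx
      rw [Real.dist_eq] at hx ⊢
      have hx1 : |x - t| < t / 2 :=
        lt_of_lt_of_le hx (le_trans (min_le_left _ _) (min_le_left _ _))
      have hx2 : |x - t| < (1 - t) / 2 :=
        lt_of_lt_of_le hx (le_trans (min_le_left _ _) (min_le_right _ _))
      have hx3 : |x - t| < ε / (C₀ + 1) := lt_of_lt_of_le hx (min_le_right _ _)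
      rw [abs_lt] at hx1 hx2
      have hxIoo : x ∈ Set.Ioo (0:ℝ) 1 := by
        constructor
        · linarith [ht.1, hx1.1]
        · linarith [ht.2, hx2.2]
      calc |w x - w t| ≤ C₀ * |x - t| := hwlip x hxIoo t ht
        _ ≤ C₀ * (ε / (C₀ + 1)) := mul_le_mul_of_nonneg_left hx3.le hC₀
        _ < ε := by
            have h7 : C₀ / (C₀ + 1) < 1 := (div_lt_one (by linarith)).mpr (by linarith)
            have h8 : C₀ * (ε / (C₀ + 1)) = ε * (C₀ / (C₀ + 1)) := by ring
            rw [h8]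
            nlinarith
  -- interior derivative of the limit
  have hwD : ∀ t ∈ Set.Ioo (0:ℝ) 1,
      HasDerivAt w (c * a' * Rab a' b' (w t) - f t) t := by
    intro t ht
    set u₀ := t / 2 with hu₀def
    set w₀ := (t + 1) / 2 with hw₀def
    have hu₀ : u₀ ∈ Set.Ioo (0:ℝ) 1 := ⟨by linarith [ht.1], by linarith [ht.1, ht.2]⟩
    have hw₀ : w₀ ∈ Set.Ioo (0:ℝ) 1 := ⟨by linarith [ht.1, ht.2], by linarith [ht.2]⟩
    have hu₀t : u₀ < t := by linarith [ht.1]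
    have htw₀ : t < w₀ := by linarith [ht.2]
    have hconth : ∀ x ∈ Set.Ioo (0:ℝ) 1,
        ContinuousAt (fun s => c * a' * Rab a' b' (w s) - f s) x := by
      intro x hx
      have hwx0 : 0 ≤ w x :=
        le_trans (hZ.nonneg x (Set.Ioo_subset_Icc_self hx)) (hw_band x hx).1
      apply ContinuousAt.sub
      · exact continuousAt_const.mul ((Rab_continuousAt ha' hb' hwx0).comp (hwcontAt x hx))
      · exact hH.1.continuousAt (Icc_mem_nhds hx.1 hx.2)
    have hconthOn : ContinuousOn (fun s => c * a' * Rab a' b' (w s) - f s)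
        (Set.Ioo (0:ℝ) 1) := fun x hx => (hconth x hx).continuousWithinAt
    have hint : IntervalIntegrable (fun s => c * a' * Rab a' b' (w s) - f s)
        MeasureTheory.volume u₀ t := by
      apply ContinuousOn.intervalIntegrable_of_Icc hu₀t.le
      apply hconthOn.mono
      intro x hx
      exact ⟨lt_of_lt_of_le hu₀.1 hx.1, lt_of_le_of_lt hx.2 ht.2⟩
    have hmeas : StronglyMeasurableAtFilter
        (fun s => c * a' * Rab a' b' (w s) - f s) (𝓝 t) MeasureTheory.volume :=
      hconthOn.stronglyMeasurableAtFilter isOpen_Ioo t ht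
    have hDI := intervalIntegral.integral_hasDerivAt_right hint hmeas (hconth t ht)
    have hg : HasDerivAt
        (fun x => w u₀ + ∫ s in u₀..x, (c * a' * Rab a' b' (w s) - f s))
        (c * a' * Rab a' b' (w t) - f t) t := hDI.const_add (w u₀)
    apply hg.congr_of_eventuallyEq
    apply Filter.eventuallyEq_of_mem (Ioo_mem_nhds hu₀t htw₀)
    intro x hx
    have hxIoo : x ∈ Set.Ioo (0:ℝ) 1 := ⟨lt_trans hu₀.1 hx.1, lt_trans hx.2 hw₀.2⟩
    have h9 := hinteq u₀ x hu₀ hxIoo hx.1.le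
    show w x = w u₀ + ∫ s in u₀..x, (c * a' * Rab a' b' (w s) - f s)
    linarith
  -- derivative at the endpoints by squeezing between `0` and the slope of `Y`
  have hwnn : ∀ x ∈ Set.Icc (0:ℝ) 1, 0 ≤ w x := by
    intro x hx
    rcases eq_or_lt_of_le hx.1 with h0 | h0
    · rw [← h0, hw0]
    rcases eq_or_lt_of_le hx.2 with h1 | h1
    · rw [h1, hw1]
    · exact le_trans (hZ.nonneg x hx) (hw_band x ⟨h0, h1⟩).1
  have hwleY : ∀ x ∈ Set.Icc (0:ℝ) 1, w x ≤ Y x := by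
    intro x hx
    rcases eq_or_lt_of_le hx.1 with h0 | h0
    · rw [← h0, hw0, hY.y0]
    rcases eq_or_lt_of_le hx.2 with h1 | h1
    · rw [h1, hw1, hY.y1]
    · exact (hw_band x ⟨h0, h1⟩).2
  have hw_deriv0 : HasDerivWithinAt w 0 (Set.Icc 0 1) 0 := by
    have hYd0 := hY.dv 0 (Set.left_mem_Icc.mpr zero_le_one)
    have hY0val : c * a * Rab a b (Y 0) - f 0 = 0 := by
      rw [hY.y0, Rab_zero, hH.2.1]
      ring
    rw [hY0val] at hYd0
    have hslY0 := hasDerivWithinAt_iff_tendsto_slope.mp hYd0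
    rw [hasDerivWithinAt_iff_tendsto_slope]
    apply tendsto_of_tendsto_of_tendsto_of_le_of_le' tendsto_const_nhds hslY0
    · apply Filter.eventually_of_mem self_mem_nhdsWithin
      rintro x ⟨hxIcc, hxne⟩
      have hxne' : x ≠ 0 := hxne
      have hx0 : 0 < x := lt_of_le_of_ne hxIcc.1 (Ne.symm hxne')
      rw [slope_def_field, hw0]
      apply div_nonneg (by simpa using hwnn x hxIcc) (by linarith)
    · apply Filter.eventually_of_mem self_mem_nhdsWithin
      rintro x ⟨hxIcc, hxne⟩
      have hxne' : x ≠ 0 := hxne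
      have hx0 : 0 < x := lt_of_le_of_ne hxIcc.1 (Ne.symm hxne')
      rw [slope_def_field, slope_def_field, hw0, hY.y0]
      apply (div_le_div_iff_of_pos_right (by linarith : (0:ℝ) < x - 0)).mpr
      have := hwleY x hxIcc
      linarith
  have hw_deriv1 : HasDerivWithinAt w 0 (Set.Icc 0 1) 1 := by
    have hYd1 := hY.dv 1 (Set.right_mem_Icc.mpr zero_le_one)
    have hY1val : c * a * Rab a b (Y 1) - f 1 = 0 := by
      rw [hY.y1, Rab_zero, hH.2.2.1]
      ring
    rw [hY1val] at hYd1
    have hslY1 := hasDerivWithinAt_iff_tendsto_slope.mp hYd1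
    rw [hasDerivWithinAt_iff_tendsto_slope]
    apply tendsto_of_tendsto_of_tendsto_of_le_of_le' hslY1 tendsto_const_nhds
    · apply Filter.eventually_of_mem self_mem_nhdsWithin
      rintro x ⟨hxIcc, hxne⟩
      have hxne' : x ≠ 1 := hxne
      have hx1 : x < 1 := lt_of_le_of_ne hxIcc.2 hxne'
      rw [slope_def_field, slope_def_field, hw1, hY.y1]
      have h1 : x - 1 < 0 := by linarith
      have h2 := hwleY x hxIcc
      rw [div_le_div_right_of_neg h1]
      linarith
    · apply Filter.eventually_of_mem self_mem_nhdsWithin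
      rintro x ⟨hxIcc, hxne⟩
      have hxne' : x ≠ 1 := hxne
      have hx1 : x < 1 := lt_of_le_of_ne hxIcc.2 hxne'
      rw [slope_def_field, hw1]
      rw [div_nonpos_iff]
      left
      constructor
      · have := hwnn x hxIcc
        linarith
      · linarith
  -- assemble the solution
  refine ⟨w, ⟨hw0, hw1, ?_, ?_⟩⟩
  · intro v hv
    exact lt_of_lt_of_le (hZ.pos v hv) (hw_band v hv).1
  · intro v hv
    rcases eq_or_lt_of_le hv.1 with h0 | h0
    · have hval : c * a' * Rab a' b' (w v) - f v = 0 := by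
        rw [← h0, hw0, Rab_zero, hH.2.1]
        ring
      rw [hval, ← h0]
      exact hw_deriv0
    rcases eq_or_lt_of_le hv.2 with h1 | h1
    · have hval : c * a' * Rab a' b' (w v) - f v = 0 := by
        rw [h1, hw1, Rab_zero, hH.2.2.1]
        ring
      rw [hval, h1]
      exact hw_deriv1
    · exact (hwD v ⟨h0, h1⟩).hasDerivWithinAt

/-! ### Master comparison lemma -/

lemma master {f : ℝ → ℝ} (hH : HypH f) (hF1 : 0 ≤ Ffn f 1)
    {a b a' b' c c' : ℝ} (ha : 0 < a) (hb : 0 < b) (ha' : 0 < a') (hb' : 0 < b')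
    (hglt : ∀ s : ℝ, 0 < s → a * Rab a b s < a' * Rab a' b' s)
    (hc : Admissible f a b c)
    (hc' : IsLeast {x | Admissible f a' b' x} c') : c' ≤ c := by
  rcases le_or_gt c' c with h | h
  · exact h
  obtain ⟨Y, hY⟩ := admissible_sol hc
  have hc0 : 0 ≤ c := speed_nonneg hH hF1 ha hb hY
  rcases eq_or_lt_of_le hc0 with hceq | hcpos
  · have h0 : Admissible f a' b' 0 := by
      apply sol_admissible (y := Y)
      apply zero_transfer (a := a) (b := b)
      exact (hceq ▸ hY)
    have h1 : c' ≤ 0 := hc'.2 h0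
    rw [← hceq]
    exact h1
  · obtain ⟨Z, hZ⟩ := admissible_sol hc'.1
    have hc'pos : 0 < c' := lt_trans hcpos h
    have hZY : ∀ v ∈ Set.Ioo (0:ℝ) 1, Z v < Y v := by
      apply crossing hY hZ
      · intro s hs
        have h1 := hglt s hs
        have h2 : 0 < a * Rab a b s := mul_pos ha (Rab_pos ha hb hs)
        have h3 : 0 < a' * Rab a' b' s := lt_trans h2 h1
        calc c * a * Rab a b s = c * (a * Rab a b s) := by ring
          _ ≤ c * (a' * Rab a' b' s) := mul_le_mul_of_nonneg_left h1.le hcpos.le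
          _ < c' * (a' * Rab a' b' s) := mul_lt_mul_of_pos_right h h3
          _ = c' * a' * Rab a' b' s := by ring
      · intro s hs t ht hst
        have h4 : Rab a' b' s ≤ Rab a' b' t := Rab_monotoneOn ha' hb' hs ht hst
        calc c' * a' * Rab a' b' s ≤ c' * a' * Rab a' b' t := by
              apply mul_le_mul_of_nonneg_left h4 (by positivity)
          _ = c' * a' * Rab a' b' t := rfl
    obtain ⟨w, hw⟩ := construct hH ha hb ha' hb' hcpos h hglt hY hZ hZY
    exact hc'.2 (sol_admissible hw)

end Aux

/-- monotonicity of the critical speed: for fixed `b` the critical speed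
is nonincreasing in `a`, and for fixed `a` it is nondecreasing in `b`. -/
theorem statement3 (f : ℝ → ℝ) (hH : HypH f)
    (hT : TypeA f ∨ ∃ α : ℝ, TypeB f α ∨ TypeC f α) :
    (∀ b : ℝ, 0 < b → ∀ a₁ a₂ : ℝ, 0 < a₁ → a₁ ≤ a₂ →
      ∀ c₁ c₂ : ℝ, IsLeast {c | Admissible f a₁ b c} c₁ →
        IsLeast {c | Admissible f a₂ b c} c₂ → c₂ ≤ c₁) ∧
    (∀ a : ℝ, 0 < a → ∀ b₁ b₂ : ℝ, 0 < b₁ → b₁ ≤ b₂ →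
      ∀ c₁ c₂ : ℝ, IsLeast {c | Admissible f a b₁ c} c₁ →
        IsLeast {c | Admissible f a b₂ c} c₂ → c₁ ≤ c₂) := by
  have hF1 : 0 ≤ Ffn f 1 := F1_nonneg hH hT
  constructor
  · intro b hb a₁ a₂ ha₁ ha12 c₁ c₂ hL₁ hL₂
    rcases eq_or_lt_of_le ha12 with rfl | hlt
    · exact le_of_eq (hL₂.unique hL₁)
    · exact master hH hF1 ha₁ hb (lt_trans ha₁ hlt) hb
        (fun s hs => Rab_strict_a ha₁ hlt hb hs) hL₁.1 hL₂
  · intro a ha b₁ b₂ hb₁ hb12 c₁ c₂ hL₁ hL₂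
    rcases eq_or_lt_of_le hb12 with rfl | hlt
    · exact le_of_eq (hL₁.unique hL₂)
    · exact master hH hF1 ha (lt_trans hb₁ hlt) ha hb₁
        (fun s hs => mul_lt_mul_of_pos_left (Rab_strict_b ha hb₁ hlt hs) ha)
        hL₂.1 hL₁
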